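/- Let k ≤ min(m,n), f : ℝ^{m×n} → ℝ continuously differentiable, and X* ∈ M_{≤k} a critical point of f on M_{≤k}, meaning that the projection of −∇f(X*) onto the tangent cone T_{X*}M_{≤k} is zero (equivalently, −∇f(X*) lies in the polar of the tangent cone). Then either rank(X*) = k or ∇f(X*) = 0. -/

import Mathlib

open scoped RealInnerProductSpace

/-- View a point of `ℝ^{m×n}` (with the Frobenius/Euclidean inner product) as a matrix. -/
def toMat {m n : ℕ} (x : EuclideanSpace ℝ (Fin m × Fin n)) : Matrix (Fin m) (Fin n) ℝ :=
  Matrix.of fun i j => x (i, j)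

/-- Sequential tangent cone of `M ⊆ ℝ^{m×n}` at `x`. -/
def seqTangentCone {m n : ℕ} (M : Set (EuclideanSpace ℝ (Fin m × Fin n)))
    (x : EuclideanSpace ℝ (Fin m × Fin n)) : Set (EuclideanSpace ℝ (Fin m × Fin n)) :=
  {ξ | ∃ (X : ℕ → EuclideanSpace ℝ (Fin m × Fin n)) (a : ℕ → ℝ),
      (∀ i, X i ∈ M) ∧ (∀ i, 0 < a i) ∧
      Filter.Tendsto X Filter.atTop (nhds x) ∧
      Filter.Tendsto (fun i => a i • (X i - x)) Filter.atTop (nhds ξ)}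

lemma rank_add_le' {m n : ℕ} (A B : Matrix (Fin m) (Fin n) ℝ) :
    (A + B).rank ≤ A.rank + B.rank := by
  rw [Matrix.rank, Matrix.rank, Matrix.rank, Matrix.mulVecLin_add]
  have h : LinearMap.range (A.mulVecLin + B.mulVecLin) ≤
      LinearMap.range A.mulVecLin ⊔ LinearMap.range B.mulVecLin := by
    rintro x ⟨y, rfl⟩
    exact Submodule.mem_sup.mpr ⟨_, ⟨y, rfl⟩, _, ⟨y, rfl⟩, rfl⟩
  have h2 := Submodule.finrank_sup_add_finrank_inf_eq
    (LinearMap.range A.mulVecLin) (LinearMap.range B.mulVecLin)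
  have h3 := Submodule.finrank_mono h
  omega

lemma rank_stdBasisMatrix_le {m n : ℕ} (i : Fin m) (j : Fin n) (c : ℝ) :
    (Matrix.single i j c).rank ≤ 1 := by
  have heq : Matrix.single i j c =
      Matrix.replicateCol Unit (Pi.single i c) * Matrix.replicateRow Unit (Pi.single j (1 : ℝ)) := by
    ext i' j'
    simp [Matrix.mul_apply, Matrix.single, Pi.single_apply, ite_and]
    split <;> split <;> simp_all [eq_comm]
  rw [heq]
  calc (Matrix.replicateCol Unit (Pi.single i c) * Matrix.replicateRow Unit (Pi.single j (1 : ℝ))).rank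
      ≤ (Matrix.replicateCol Unit (Pi.single i c)).rank := Matrix.rank_mul_le_left _ _
    _ ≤ Fintype.card Unit := Matrix.rank_le_card_width _
    _ = 1 := by simp

/-- Let `k ≤ min(m,n)`, `f` continuously differentiable and `X*` a critical
point of `f` on `M_{≤k}` (the projection of `−∇f(X*)` onto the tangent cone is zero, i.e.
`−∇f(X*)` lies in the polar of the tangent cone). Then `rank X* = k` or `∇f(X*) = 0`. -/
theorem stmt_8 {m n k : ℕ} (hkm : k ≤ m) (hkn : k ≤ n)
    (f : EuclideanSpace ℝ (Fin m × Fin n) → ℝ) (hf : ContDiff ℝ 1 f)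
    (Xstar : EuclideanSpace ℝ (Fin m × Fin n))
    (hX : (toMat Xstar).rank ≤ k)
    (hcrit : ∀ Ξ ∈ seqTangentCone {Y : EuclideanSpace ℝ (Fin m × Fin n) |
        (toMat Y).rank ≤ k} Xstar, ⟪-(gradient f Xstar), Ξ⟫ ≤ 0) :
    (toMat Xstar).rank = k ∨ gradient f Xstar = 0 := by
  by_cases hrk : (toMat Xstar).rank = k
  · exact Or.inl hrk
  right
  have hlt : (toMat Xstar).rank + 1 ≤ k := lt_of_le_of_ne hX hrk
  set g := gradient f Xstar with hg
  -- every scaled single-entry matrix lies in the tangent cone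
  have hmem : ∀ (i : Fin m) (j : Fin n) (c : ℝ),
      (EuclideanSpace.single (i, j) c : EuclideanSpace ℝ (Fin m × Fin n)) ∈
        seqTangentCone {Y : EuclideanSpace ℝ (Fin m × Fin n) | (toMat Y).rank ≤ k} Xstar := by
    intro i j c
    set ξ : EuclideanSpace ℝ (Fin m × Fin n) := EuclideanSpace.single (i, j) c with hξ
    refine ⟨fun t => Xstar + ((t : ℝ) + 1)⁻¹ • ξ, fun t => (t : ℝ) + 1, ?_, ?_, ?_, ?_⟩
    · intro t
      have hmat : toMat (Xstar + ((t : ℝ) + 1)⁻¹ • ξ)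
          = toMat Xstar + Matrix.single i j (((t : ℝ) + 1)⁻¹ * c) := by
        ext i' j'
        simp only [toMat, hξ, Matrix.of_apply, Matrix.add_apply, Matrix.single,
          PiLp.add_apply, PiLp.smul_apply, EuclideanSpace.single_apply, smul_eq_mul]
        by_cases h1 : i = i' <;> by_cases h2 : j = j' <;>
          simp [h1, h2, Prod.ext_iff, eq_comm]
      show (toMat (Xstar + ((t : ℝ) + 1)⁻¹ • ξ)).rank ≤ k
      rw [hmat]
      calc (toMat Xstar + Matrix.single i j (((t : ℝ) + 1)⁻¹ * c)).rank
          ≤ (toMat Xstar).rank + (Matrix.single i j (((t : ℝ) + 1)⁻¹ * c)).rank :=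
            rank_add_le' _ _
        _ ≤ (toMat Xstar).rank + 1 := by
            have := rank_stdBasisMatrix_le i j (((t : ℝ) + 1)⁻¹ * c); omega
        _ ≤ k := hlt
    · intro t
      positivity
    · have h0 : Filter.Tendsto (fun t : ℕ => ((t : ℝ) + 1)⁻¹) Filter.atTop (nhds 0) := by
        simpa [one_div] using tendsto_one_div_add_atTop_nhds_zero_nat (𝕜 := ℝ)
      have := (tendsto_const_nhds (x := Xstar) (f := Filter.atTop (α := ℕ))).add
        (h0.smul_const ξ)
      simpa using this
    · have : ∀ t : ℕ, ((t : ℝ) + 1) • ((Xstar + ((t : ℝ) + 1)⁻¹ • ξ) - Xstar) = ξ := by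
        intro t
        have ht : ((t : ℝ) + 1) ≠ 0 := by positivity
        rw [add_sub_cancel_left, smul_smul, mul_inv_cancel₀ ht, one_smul]
      simp only [this]
      exact tendsto_const_nhds
  -- each entry of the gradient vanishes
  have key : ∀ (i : Fin m) (j : Fin n), g (i, j) = 0 := by
    intro i j
    have h1 := hcrit _ (hmem i j (g (i, j)))
    have h2 := hcrit _ (hmem i j (-(g (i, j))))
    rw [real_inner_comm, EuclideanSpace.inner_single_left] at h1 h2
    simp only [starRingEnd_apply, star_trivial, PiLp.neg_apply] at h1 h2
    nlinarith [h1, h2]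
  ext p
  obtain ⟨i, j⟩ := p
  exact key i j
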